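/- Let w, w' ∈ ℝⁿ and b, b' ∈ ℝ, with w ≠ 0. If ReLU(w·x + b) = ReLU(w'·x + b') for all x ∈ ℝⁿ, where ReLU(t) = max(t, 0), then w' = w and b' = b. -/

import Mathlib

open Matrix

/-- A single ReLU neuron with nonzero weight vector is uniquely identifiable from the
function it computes. -/
theorem relu_neuron_identifiable
    (n : ℕ) (w w' : Fin n → ℝ) (b b' : ℝ) (hw : w ≠ 0)
    (h : ∀ x : Fin n → ℝ, max (dotProduct w x + b) 0 = max (dotProduct w' x + b') 0) :
    w' = w ∧ b' = b := by
  have hc0 : (0:ℝ) ≤ dotProduct w w := by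
    apply Finset.sum_nonneg
    intro i _
    exact mul_self_nonneg (w i)
  have hc : (0:ℝ) < dotProduct w w := by
    rcases lt_or_eq_of_le hc0 with h' | h'
    · exact h'
    · exact absurd ((dotProduct_self_eq_zero).mp h'.symm) hw
  -- key: affine functions agree everywhere
  have key : ∀ x : Fin n → ℝ, dotProduct w' x + b' = dotProduct w x + b := by
    intro x
    set c := dotProduct w w with hcdef
    set d := dotProduct w' w with hddef
    have eval : ∀ t : ℝ, 0 < dotProduct w x + b + t * c →
        dotProduct w' x + b' + t * d = dotProduct w x + b + t * c := by
      intro t ht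
      have hx := h (x + t • w)
      have e1 : dotProduct w (x + t • w) = dotProduct w x + t * c := by
        rw [dotProduct_add, dotProduct_smul]; simp [hcdef, smul_eq_mul]
      have e2 : dotProduct w' (x + t • w) = dotProduct w' x + t * d := by
        rw [dotProduct_add, dotProduct_smul]; simp [hddef, smul_eq_mul]
      rw [e1, e2, show dotProduct w x + t * c + b = dotProduct w x + b + t * c from by ring,
        show dotProduct w' x + t * d + b' = dotProduct w' x + b' + t * d from by ring] at hx
      have hmax : max (dotProduct w x + b + t * c) 0 = dotProduct w x + b + t * c :=
        max_eq_left ht.le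
      rw [hmax] at hx
      rcases max_cases (dotProduct w' x + b' + t * d) 0 with ⟨h1, _⟩ | ⟨h1, _⟩
      · rw [h1] at hx; linarith
      · rw [h1] at hx; linarith
    set T : ℝ := (|dotProduct w x + b| + 1) / c with hT
    have hT1 : 0 < dotProduct w x + b + T * c := by
      have : T * c = |dotProduct w x + b| + 1 := by
        rw [hT, div_mul_cancel₀ _ hc.ne']
      rw [this]
      have := abs_nonneg (dotProduct w x + b)
      have := neg_abs_le (dotProduct w x + b)
      linarith
    have hT2 : 0 < dotProduct w x + b + (T + 1) * c := by nlinarith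
    have e1 := eval T hT1
    have e2 := eval (T + 1) hT2
    have hdc : d = c := by nlinarith
    rw [hdc] at e1
    linarith
  have hb : b' = b := by
    have := key 0
    simpa using this
  constructor
  · funext i
    have := key (Pi.single i 1)
    rw [hb] at this
    simpa [dotProduct_single] using this
  · exact hb
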